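/- arXiv:1902.00277 — 3 statements merged into one kernel-verified Lean document; each statement's English description precedes it below -/
import Mathlib

section
/- Let β(ε) = 2ν + 2ν_tur [ε:ε]^{1/2} with ν, ν_tur > 0 on 3×3 symmetric real matrices. Then the map ε ↦ β(ε)ε is strongly monotone: for all symmetric matrices ε₁, ε₂, [β(ε₁)ε₁ − β(ε₂)ε₂ : ε₁ − ε₂] ≥ 2ν [ε₁ − ε₂ : ε₁ − ε₂]. -/
/-- Strong monotonicity of the Smagorinsky stress `ε ↦ β(ε)ε`,
`β(ε) = 2ν + 2ν_tur [ε:ε]^{1/2}`, on (3×3)-matrices identified with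
`EuclideanSpace ℝ (Fin 3 × Fin 3)` (Frobenius inner product). -/
theorem smagorinsky_strong_monotone (ν νtur : ℝ) (hν : 0 < ν) (hνtur : 0 < νtur)
    (ε₁ ε₂ : EuclideanSpace ℝ (Fin 3 × Fin 3))
    (hsym₁ : ∀ i j : Fin 3, ε₁ (i, j) = ε₁ (j, i))
    (hsym₂ : ∀ i j : Fin 3, ε₂ (i, j) = ε₂ (j, i)) :
    (inner ℝ ((2 * ν + 2 * νtur * (inner ℝ ε₁ ε₁ : ℝ) ^ ((1:ℝ)/2)) • ε₁
          - (2 * ν + 2 * νtur * (inner ℝ ε₂ ε₂ : ℝ) ^ ((1:ℝ)/2)) • ε₂) (ε₁ - ε₂) : ℝ)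
      ≥ 2 * ν * (inner ℝ (ε₁ - ε₂) (ε₁ - ε₂) : ℝ) := by
  have key : ∀ ε : EuclideanSpace ℝ (Fin 3 × Fin 3),
      ((inner ℝ ε ε : ℝ)) ^ ((1:ℝ)/2) = ‖ε‖ := by
    intro ε
    rw [real_inner_self_eq_norm_sq, ← Real.rpow_natCast ‖ε‖ 2,
      ← Real.rpow_mul (norm_nonneg _)]
    norm_num
  rw [key, key]
  have hc : (inner ℝ ε₁ ε₂ : ℝ) ≤ ‖ε₁‖ * ‖ε₂‖ := real_inner_le_norm ε₁ ε₂
  have h1 : (inner ℝ ε₁ ε₁ : ℝ) = ‖ε₁‖ ^ 2 := real_inner_self_eq_norm_sq ε₁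
  have h2 : (inner ℝ ε₂ ε₂ : ℝ) = ‖ε₂‖ ^ 2 := real_inner_self_eq_norm_sq ε₂
  have hsymm : (inner ℝ ε₂ ε₁ : ℝ) = inner ℝ ε₁ ε₂ := real_inner_comm ε₁ ε₂
  simp only [inner_sub_left, inner_sub_right, inner_smul_left, RCLike.inner_apply,
    conj_trivial, h1, h2, hsymm]
  set n1 := ‖ε₁‖
  set n2 := ‖ε₂‖
  set c : ℝ := inner ℝ ε₁ ε₂
  have hn1 : 0 ≤ n1 := norm_nonneg _
  have hn2 : 0 ≤ n2 := norm_nonneg _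
  nlinarith [mul_nonneg (mul_nonneg (sq_nonneg (n1 - n2)) (add_nonneg hn1 hn2)) hνtur.le,
    mul_nonneg (mul_nonneg (add_nonneg hn1 hn2) (sub_nonneg.mpr hc)) hνtur.le]
end

section
/- Let β(ε) = 2ν + 2ν_tur [ε:ε]^{1/2} with ν, ν_tur ≥ 0 on 3×3 symmetric matrices. Then the map ε ↦ β(ε)ε is monotone: [β(ε₁)ε₁ − β(ε₂)ε₂ : ε₁ − ε₂] ≥ 0 for all symmetric ε₁, ε₂. -/
/-- Monotonicity of the Smagorinsky stress `ε ↦ β(ε)ε`, `β(ε) = 2ν + 2ν_tur [ε:ε]^{1/2}`,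
with `ν, ν_tur ≥ 0`, on (3×3)-matrices identified with `EuclideanSpace ℝ (Fin 3 × Fin 3)`
(Frobenius inner product). -/
theorem smagorinsky_monotone (ν νtur : ℝ) (hν : 0 ≤ ν) (hνtur : 0 ≤ νtur)
    (ε₁ ε₂ : EuclideanSpace ℝ (Fin 3 × Fin 3))
    (hsym₁ : ∀ i j : Fin 3, ε₁ (i, j) = ε₁ (j, i))
    (hsym₂ : ∀ i j : Fin 3, ε₂ (i, j) = ε₂ (j, i)) :
    (inner ℝ ((2 * ν + 2 * νtur * (inner ℝ ε₁ ε₁ : ℝ) ^ ((1:ℝ)/2)) • ε₁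
          - (2 * ν + 2 * νtur * (inner ℝ ε₂ ε₂ : ℝ) ^ ((1:ℝ)/2)) • ε₂) (ε₁ - ε₂) : ℝ)
      ≥ 0 := by
  have key : ∀ ε : EuclideanSpace ℝ (Fin 3 × Fin 3),
      (inner ℝ ε ε : ℝ) ^ ((1:ℝ)/2) = ‖ε‖ := by
    intro ε
    rw [real_inner_self_eq_norm_sq, ← Real.rpow_natCast ‖ε‖ 2,
      ← Real.rpow_mul (norm_nonneg ε)]
    norm_num
  rw [key, key]
  set a := ‖ε₁‖ with ha
  set b := ‖ε₂‖ with hb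
  have hpa : (inner ℝ ε₁ ε₁ : ℝ) = a ^ 2 := real_inner_self_eq_norm_sq ε₁
  have hpb : (inner ℝ ε₂ ε₂ : ℝ) = b ^ 2 := real_inner_self_eq_norm_sq ε₂
  have hr : (inner ℝ ε₁ ε₂ : ℝ) ≤ a * b := real_inner_le_norm ε₁ ε₂
  have hsymm : (inner ℝ ε₂ ε₁ : ℝ) = inner ℝ ε₁ ε₂ := real_inner_comm ε₁ ε₂
  have ha0 : 0 ≤ a := norm_nonneg ε₁
  have hb0 : 0 ≤ b := norm_nonneg ε₂
  rw [inner_sub_left, inner_sub_right, inner_sub_right, real_inner_smul_left,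
    real_inner_smul_left, real_inner_smul_left, real_inner_smul_left, hpa, hpb, hsymm]
  nlinarith [sq_nonneg (a - b), mul_nonneg (mul_nonneg hνtur (add_nonneg ha0 hb0)) (sq_nonneg (a - b)), mul_nonneg hν (sq_nonneg (a - b)), mul_nonneg (mul_nonneg hνtur (add_nonneg ha0 hb0)) (sub_nonneg.mpr hr)]
end

section
/- The function D(ε) = ν [ε:ε] + (2/3) ν_tur [ε:ε]^{3/2}, defined on the vector space of 3×3 symmetric real matrices with ν, ν_tur ≥ 0, is convex. -/
open Set

/-- Composition of a convex function on `Ici 0` that is monotone on `Ici 0`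
with a nonnegative convex function is convex. -/
lemma convexOn_comp_aux {E : Type*} [AddCommGroup E] [Module ℝ E] {s : Set E}
    {f : E → ℝ} {g : ℝ → ℝ} (hf : ConvexOn ℝ s f) (hf0 : ∀ x ∈ s, 0 ≤ f x)
    (hg : ConvexOn ℝ (Ici 0) g) (hg' : MonotoneOn g (Ici 0)) :
    ConvexOn ℝ s (g ∘ f) := by
  refine ⟨hf.1, fun x hx y hy a b ha hb hab => ?_⟩
  have hfx := hf0 x hx
  have hfy := hf0 y hy
  have h1 : (0:ℝ) ≤ f (a • x + b • y) := hf0 _ (hf.1 hx hy ha hb hab)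
  have h2 : (0:ℝ) ≤ a * f x + b * f y := by positivity
  calc g (f (a • x + b • y)) ≤ g (a * f x + b * f y) :=
        hg' h1 h2 (hf.2 hx hy ha hb hab)
    _ = g (a • f x + b • f y) := by simp [smul_eq_mul]
    _ ≤ a • g (f x) + b • g (f y) := hg.2 hfx hfy ha hb hab

/-- Convexity of the Smagorinsky potential `D(ε) = ν [ε:ε] + (2/3) ν_tur [ε:ε]^{3/2}`
on the subspace of symmetric (3×3)-matrices, identified with
`EuclideanSpace ℝ (Fin 3 × Fin 3)` (Frobenius inner product). -/
theorem smagorinskyD_convex (ν νtur : ℝ) (hν : 0 ≤ ν) (hνtur : 0 ≤ νtur) :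
    ConvexOn ℝ {ε : EuclideanSpace ℝ (Fin 3 × Fin 3) | ∀ i j : Fin 3, ε (i, j) = ε (j, i)}
      (fun ε => ν * (inner ℝ ε ε : ℝ) + 2/3 * νtur * (inner ℝ ε ε : ℝ) ^ ((3:ℝ)/2)) := by
  set s : Set (EuclideanSpace ℝ (Fin 3 × Fin 3)) :=
    {ε | ∀ i j : Fin 3, ε (i, j) = ε (j, i)} with hs
  have hconv : Convex ℝ s := by
    intro x hx y hy a b ha hb hab
    intro i j
    have hx' := hx i j
    have hy' := hy i j
    simp only [PiLp.add_apply, PiLp.smul_apply, smul_eq_mul]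
    rw [hx', hy']
  -- rewrite the function as `g ∘ norm`
  have hfun : (fun ε : EuclideanSpace ℝ (Fin 3 × Fin 3) =>
      ν * (inner ℝ ε ε : ℝ) + 2/3 * νtur * (inner ℝ ε ε : ℝ) ^ ((3:ℝ)/2)) =
      (fun t : ℝ => ν * t ^ 2 + 2/3 * νtur * t ^ 3) ∘ (fun ε => ‖ε‖) := by
    funext ε
    have h1 : (inner ℝ ε ε : ℝ) = ‖ε‖ ^ 2 := real_inner_self_eq_norm_sq ε
    have h2 : (‖ε‖ ^ 2 : ℝ) ^ ((3:ℝ)/2) = ‖ε‖ ^ 3 := by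
      rw [← Real.rpow_natCast ‖ε‖ 2, ← Real.rpow_mul (norm_nonneg ε)]
      norm_num
    simp [h1, h2]
  rw [hfun]
  have hnorm : ConvexOn ℝ s (fun ε : EuclideanSpace ℝ (Fin 3 × Fin 3) => ‖ε‖) :=
    convexOn_norm hconv
  have hg : ConvexOn ℝ (Ici 0) (fun t : ℝ => ν * t ^ 2 + 2/3 * νtur * t ^ 3) := by
    have h2 := (convexOn_pow (𝕜 := ℝ) 2).smul hν
    have h3 := (convexOn_pow (𝕜 := ℝ) 3).smul (by positivity : (0:ℝ) ≤ 2/3 * νtur)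
    simpa [smul_eq_mul, Pi.add_def] using h2.add h3
  have hg' : MonotoneOn (fun t : ℝ => ν * t ^ 2 + 2/3 * νtur * t ^ 3) (Ici 0) := by
    intro x hx y hy hxy
    have hx0 : (0:ℝ) ≤ x := hx
    dsimp only
    gcongr
  exact convexOn_comp_aux hnorm (fun x _ => norm_nonneg x) hg hg'
end
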